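/- The function u(c) = cK(c) = c(1 + ε(1-η)c)/(1 + εc) is strictly increasing on (0,∞), satisfies u(σ) = 1, u(c) ∈ (0,1) for c ∈ (0,σ), and u(c) ∈ (1,∞) for c ∈ (σ,∞). -/

import Mathlib

theorem u_properties (ε η : ℝ) (hε : 0 < ε) (hη0 : 0 < η) (hη1 : η < 1) :
    let lamP := (-(ε+1) + Real.sqrt ((ε+1)^2 - 4*ε*η)) / (2*ε)
    let σ := (lamP + 1) / (1 - η)
    let u := fun c : ℝ => c * ((1 + ε*(1-η)*c) / (1 + ε*c))
    StrictMonoOn u (Set.Ioi 0) ∧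
    u σ = 1 ∧
    (∀ c : ℝ, 0 < c → c < σ → u c ∈ Set.Ioo (0:ℝ) 1) ∧
    (∀ c : ℝ, σ < c → 1 < u c) := by
  intro lamP σ u
  have h1η : 0 < 1 - η := by linarith
  set s := Real.sqrt ((ε+1)^2 - 4*ε*η) with hs_def
  have hD : 0 ≤ (ε+1)^2 - 4*ε*η := by nlinarith [sq_nonneg (ε-1)]
  have hs0 : 0 ≤ s := Real.sqrt_nonneg _
  have hs2 : s^2 = (ε+1)^2 - 4*ε*η := Real.sq_sqrt hD
  have hsgt : 1 - ε < s := by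
    nlinarith [sq_nonneg (s - (1-ε)), sq_nonneg (s + (1-ε))]
  have hlam : lamP = (-(ε+1) + s) / (2*ε) := rfl
  have hσdef : σ = (lamP + 1) / (1 - η) := rfl
  have hσpos : 0 < σ := by
    rw [hσdef, hlam]
    apply div_pos _ h1η
    have : 0 < (-(ε+1) + s + 2*ε) / (2*ε) := by
      apply div_pos (by linarith) (by linarith)
    have heq : (-(ε+1) + s) / (2*ε) + 1 = (-(ε+1) + s + 2*ε) / (2*ε) := by
      field_simp
    linarith [heq ▸ this]
  -- quadratic relation for σ
  have hlamquad : ε*lamP^2 + (ε+1)*lamP + η = 0 := by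
    have hε' : (2*ε) ≠ 0 := by positivity
    rw [hlam]
    field_simp
    linear_combination hs2
  have hσquad : ε*(1-η)*σ^2 + (1-ε)*σ - 1 = 0 := by
    have h1η' : (1-η) ≠ 0 := ne_of_gt h1η
    have hσL : σ * (1-η) = lamP + 1 := by rw [hσdef]; field_simp
    have h2 : ε*(lamP+1)^2 + (1-ε)*(lamP+1) - (1-η) = 0 := by linear_combination hlamquad
    have h3 : (1-η) * (ε*(1-η)*σ^2 + (1-ε)*σ - 1) = 0 := by
      linear_combination h2 + (ε*(1-η)*σ + ε*(lamP+1) + (1-ε)) * hσL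
    rcases mul_eq_zero.mp h3 with h | h
    · exact absurd h h1η'
    · exact h
  have hmono : StrictMonoOn u (Set.Ioi 0) := by
    intro x hx y hy hxy
    simp only [Set.mem_Ioi] at hx hy
    have hdx : 0 < 1 + ε*x := by nlinarith
    have hdy : 0 < 1 + ε*y := by nlinarith
    show x * ((1 + ε*(1-η)*x) / (1 + ε*x)) < y * ((1 + ε*(1-η)*y) / (1 + ε*y))
    rw [mul_div_assoc', mul_div_assoc', div_lt_div_iff₀ hdx hdy]
    have key : y * (1 + ε*(1-η)*y) * (1 + ε*x) - x * (1 + ε*(1-η)*x) * (1 + ε*y)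
        = (y - x) * (1 + ε*(1-η)*(x+y) + ε*(1-η)*ε*x*y) := by ring
    have ha : 0 < ε*(1-η) := mul_pos hε h1η
    have h4 : 0 < ε*(1-η)*(x+y) := mul_pos ha (by linarith)
    have h5 : 0 < ε*(1-η)*ε*x*y := by positivity
    nlinarith [mul_pos (sub_pos.mpr hxy) (by linarith : (0:ℝ) < 1 + ε*(1-η)*(x+y) + ε*(1-η)*ε*x*y)]
  have hdσ : 0 < 1 + ε*σ := by nlinarith
  have huσ : u σ = 1 := by
    show σ * ((1 + ε*(1-η)*σ) / (1 + ε*σ)) = 1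
    rw [mul_div_assoc', div_eq_one_iff_eq (ne_of_gt hdσ)]
    nlinarith [hσquad]
  refine ⟨hmono, huσ, ?_, ?_⟩
  · intro c hc hcσ
    constructor
    · have hdc : 0 < 1 + ε*c := by nlinarith
      have hnc : 0 < 1 + ε*(1-η)*c := by nlinarith
      positivity
    · have := hmono (Set.mem_Ioi.mpr hc) (Set.mem_Ioi.mpr hσpos) hcσ
      rwa [huσ] at this
  · intro c hc
    have := hmono (Set.mem_Ioi.mpr hσpos) (Set.mem_Ioi.mpr (hσpos.trans hc)) hc
    rwa [huσ] at this
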